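/- Let H₂ = [1 1 ⋯ 1; x^{i₁} x^{i₂} ⋯ x^{i_{n_v}}] be a parity-check matrix built from N × N circulant permutation matrices x^{iⱼ} (shift by iⱼ mod N), with i₁ = 0. Then girth(H₂) > 4 if and only if the residues i₁, i₂, …, i_{n_v} are pairwise distinct modulo N. -/
import Mathlib


open Matrix

/-- The permutation matrix (over ℕ) associated with a permutation. -/
def permMatrix {N : ℕ} (σ : Equiv.Perm (Fin N)) : Matrix (Fin N) (Fin N) ℕ :=
  Matrix.of fun i j => if σ i = j then 1 else 0

/-- The Tanner graph of an ℕ-valued matrix: the bipartite simple graph on rows ⊕ columns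
with an edge between row `i` and column `j` whenever `M i j ≠ 0`. -/
def tanner {α β : Type*} (M : Matrix α β ℕ) : SimpleGraph (α ⊕ β) :=
  SimpleGraph.fromRel fun u v => ∃ i j, u = Sum.inl i ∧ v = Sum.inr j ∧ M i j ≠ 0

open Classical in
/-- The girth of the Tanner (multi)graph of an ℕ-valued matrix: an entry `≥ 2` is a
multiple edge, giving girth `2`; otherwise the girth of the Tanner simple graph
(`⊤` if there is no cycle). -/
noncomputable def matGirth {α β : Type*} (M : Matrix α β ℕ) : ℕ∞ :=
  if ∃ i j, 2 ≤ M i j then 2 else (tanner M).egirth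


/-- The `N × N` circulant permutation matrix with shift `r` (mod `N`):
entry `(i, j)` equals `1` iff `j ≡ i + r (mod N)`. -/
def circ (N : ℕ) (r : ZMod N) : Matrix (Fin N) (Fin N) ℕ :=
  Matrix.of fun i j => if ((j : ℕ) : ZMod N) = ((i : ℕ) : ZMod N) + r then 1 else 0

/-- The block matrix with first block row all identities and second block row the
circulant permutation matrices `circ N (e j)`. -/
def H2circ {N nv : ℕ} (e : Fin nv → ZMod N) :
    Matrix (Fin 2 × Fin N) (Fin nv × Fin N) ℕ :=
  Matrix.of fun p q =>
    if p.1 = 0 then (if p.2 = q.2 then 1 else 0) else circ N (e q.1) p.2 q.2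

-- aux lemmas

lemma tanner_adj_lr {α β : Type*} (M : Matrix α β ℕ) (i : α) (j : β) :
    (tanner M).Adj (Sum.inl i) (Sum.inr j) ↔ M i j ≠ 0 := by
  simp [tanner, SimpleGraph.fromRel_adj]

@[simp] lemma tanner_not_adj_ll {α β : Type*} (M : Matrix α β ℕ) (i i' : α) :
    ¬ (tanner M).Adj (Sum.inl i) (Sum.inl i') := by
  simp [tanner, SimpleGraph.fromRel_adj]

@[simp] lemma tanner_not_adj_rr {α β : Type*} (M : Matrix α β ℕ) (j j' : β) :
    ¬ (tanner M).Adj (Sum.inr j) (Sum.inr j') := by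
  simp [tanner, SimpleGraph.fromRel_adj]

lemma finCast_inj {N : ℕ} {a b : Fin N} (h : ((a : ℕ) : ZMod N) = ((b : ℕ) : ZMod N)) :
    a = b := by
  have : (((a : ℕ) : ZMod N)).val = (((b : ℕ) : ZMod N)).val := by rw [h]
  rw [ZMod.val_natCast_of_lt a.isLt, ZMod.val_natCast_of_lt b.isLt] at this
  exact Fin.ext this

lemma H2_ne_zero {N nv : ℕ} (e : Fin nv → ZMod N) (p : Fin 2 × Fin N) (q : Fin nv × Fin N) :
    H2circ e p q ≠ 0 ↔
      (p.1 = 0 ∧ p.2 = q.2) ∨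
      (p.1 = 1 ∧ ((q.2 : ℕ) : ZMod N) = ((p.2 : ℕ) : ZMod N) + e q.1) := by
  obtain ⟨p1, p2⟩ := p
  fin_cases p1 <;> simp [H2circ, circ]

lemma no4 {N nv : ℕ} (e : Fin nv → ZMod N) (he : Function.Injective e)
    (r r' : Fin 2 × Fin N) (c c' : Fin nv × Fin N) (hr : r ≠ r') (hc : c ≠ c')
    (h1 : H2circ e r c ≠ 0) (h2 : H2circ e r c' ≠ 0)
    (h3 : H2circ e r' c ≠ 0) (h4 : H2circ e r' c' ≠ 0) : False := by
  rw [H2_ne_zero] at h1 h2 h3 h4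
  obtain ⟨p1, p2⟩ := r
  obtain ⟨p1', p2'⟩ := r'
  obtain ⟨q1, q2⟩ := c
  obtain ⟨q1', q2'⟩ := c'
  fin_cases p1 <;> fin_cases p1' <;> simp_all
  · exact hc (he h4)
  · exact hc (he h1.symm)
  · exact hr (finCast_inj h3)

@[simp] lemma tanner_adj_lr' {α β : Type*} (M : Matrix α β ℕ) (i : α) (j : β) :
    (tanner M).Adj (Sum.inl i) (Sum.inr j) ↔ M i j ≠ 0 := tanner_adj_lr M i j

@[simp] lemma tanner_adj_rl {α β : Type*} (M : Matrix α β ℕ) (i : α) (j : β) :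
    (tanner M).Adj (Sum.inr j) (Sum.inl i) ↔ M i j ≠ 0 := by
  rw [SimpleGraph.adj_comm]; exact tanner_adj_lr M i j

theorem stmt9 {N nv : ℕ} (hN : 0 < N) [NeZero nv] (e : Fin nv → ZMod N) (h0 : e 0 = 0) :
    (4 : ℕ∞) < (tanner (H2circ e)).egirth ↔ Function.Injective e := by
  haveI : NeZero N := ⟨hN.ne'⟩
  constructor
  · intro hg
    by_contra he
    rw [Function.not_injective_iff] at he
    obtain ⟨q, q', heq, hqq⟩ := he
    set a : Fin N := ⟨(e q).val, ZMod.val_lt _⟩ with ha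
    set b : Fin N := ⟨0, hN⟩ with hb
    have hacast : ((a : ℕ) : ZMod N) = e q := ZMod.natCast_zmod_val _
    have hbcast : ((b : ℕ) : ZMod N) = 0 := by simp [hb]
    have h01 : (tanner (H2circ e)).Adj (Sum.inl ((0:Fin 2), a)) (Sum.inr (q, a)) := by
      rw [tanner_adj_lr, H2_ne_zero]; exact Or.inl ⟨rfl, rfl⟩
    have h21 : (tanner (H2circ e)).Adj (Sum.inl ((1:Fin 2), b)) (Sum.inr (q, a)) := by
      rw [tanner_adj_lr, H2_ne_zero]
      exact Or.inr ⟨rfl, by rw [hacast, hbcast, zero_add]⟩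
    have h23 : (tanner (H2circ e)).Adj (Sum.inl ((1:Fin 2), b)) (Sum.inr (q', a)) := by
      rw [tanner_adj_lr, H2_ne_zero]
      exact Or.inr ⟨rfl, by rw [hacast, hbcast, zero_add, heq]⟩
    have h03 : (tanner (H2circ e)).Adj (Sum.inl ((0:Fin 2), a)) (Sum.inr (q', a)) := by
      rw [tanner_adj_lr, H2_ne_zero]; exact Or.inl ⟨rfl, rfl⟩
    let w : (tanner (H2circ e)).Walk (Sum.inl ((0:Fin 2), a)) (Sum.inl ((0:Fin 2), a)) :=
      .cons h01 (.cons h21.symm (.cons h23 (.cons h03.symm .nil)))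
    have hc : w.IsCycle := by
      rw [SimpleGraph.Walk.isCycle_def]
      refine ⟨?_, by simp [w], ?_⟩
      · rw [SimpleGraph.Walk.isTrail_def]
        simp [w, Sym2.eq_iff, hqq, Prod.ext_iff]
      · simp [w, hqq, Prod.ext_iff]
    have hle : (tanner (H2circ e)).egirth ≤ (w.length : ℕ∞) := by
      rw [SimpleGraph.egirth]
      exact iInf_le_of_le _ (iInf_le_of_le w (iInf_le _ hc))
    have hlen : w.length = 4 := by simp [w]
    rw [hlen] at hle
    exact absurd hg (not_lt.mpr (by exact_mod_cast hle))
  · intro he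
    refine lt_of_lt_of_le (show (4:ℕ∞) < 5 by norm_num) (SimpleGraph.le_egirth.mpr ?_)
    intro a w hw
    have h3l := hw.three_le_length
    rw [show (5:ℕ∞) = ((5:ℕ):ℕ∞) from rfl, Nat.cast_le]
    by_contra hlt
    push_neg at hlt
    cases w with
    | nil => simp at h3l
    | cons h1 w1 =>
      cases w1 with
      | nil => simp at h3l
      | cons h2 w2 =>
        cases w2 with
        | nil => simp at h3l
        | cons h3 w3 =>
          cases w3 with
          | nil =>
            rename_i v1 v2
            clear hw hlt h3l
            rcases a with r|c <;> rcases v1 with r1|c1 <;> rcases v2 with r2|c2 <;>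
              simp_all
          | cons h4 w4 =>
            cases w4 with
            | nil =>
              rename_i v1 v2 v3
              have hnd := hw.2
              simp only [SimpleGraph.Walk.support_cons, SimpleGraph.Walk.support_nil,
                List.tail_cons, List.nodup_cons, List.mem_cons, List.mem_singleton,
                List.not_mem_nil, List.nodup_nil] at hnd
              clear hw hlt h3l
              rcases a with r|c <;> rcases v1 with r1|c1 <;> rcases v2 with r2|c2 <;>
                rcases v3 with r3|c3 <;> simp_all
              · exact no4 e he r r2 c1 c3 (by simp_all [Ne, eq_comm]) (by simp_all [Ne, eq_comm]) h1 h4 h2 h3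
              · exact no4 e he r1 r3 c c2 (by simp_all [Ne, eq_comm]) (by simp_all [Ne, eq_comm]) h1 h2 h4 h3
            | cons h5 w5 =>
              simp only [SimpleGraph.Walk.length_cons] at hlt
              omega
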